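/- Let K be the unit square [0,1]² in ℝ², B the closed disk of radius 1/2 centered at the origin, and L the square with vertices (±π√2/8, 0), (0, ±π√2/8) (i.e., (π/4)·K rotated by 45° and centered). Then the mean widths satisfy W(L) = W(B) = 1, and vol(tK + B + L)·vol(tK) > vol(tK + B)² for all sufficiently large t > 0. -/

import Mathlib

open MeasureTheory Real
open scoped Pointwise

/-- The mean width of a set in the Euclidean plane: average over the unit circle of the
width (support value minus the infimal value) in each direction. -/
noncomputable def meanWidth (C : Set (EuclideanSpace ℝ (Fin 2))) : ℝ :=
  (∫ θ in (0 : ℝ)..(2 * π),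
      (sSup ((fun v => (inner ℝ v (((WithLp.equiv 2 (Fin 2 → ℝ)).symm ![Real.cos θ, Real.sin θ])) : ℝ)) '' C)
        - sInf ((fun v => (inner ℝ v (((WithLp.equiv 2 (Fin 2 → ℝ)).symm ![Real.cos θ, Real.sin θ])) : ℝ)) '' C))) / (2 * π)

/-! ### Auxiliary definitions -/

noncomputable def dir (θ : ℝ) : EuclideanSpace ℝ (Fin 2) :=
  (WithLp.equiv 2 (Fin 2 → ℝ)).symm ![Real.cos θ, Real.sin θ]

noncomputable def pt (a b : ℝ) : EuclideanSpace ℝ (Fin 2) :=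
  (WithLp.equiv 2 (Fin 2 → ℝ)).symm ![a, b]

@[simp] lemma pt0 (a b : ℝ) : pt a b 0 = a := rfl
@[simp] lemma pt1 (a b : ℝ) : pt a b 1 = b := rfl

def box (A B : Set ℝ) : Set (EuclideanSpace ℝ (Fin 2)) := {x | x 0 ∈ A ∧ x 1 ∈ B}

lemma box_mem (A B : Set ℝ) (x : EuclideanSpace ℝ (Fin 2)) :
    x ∈ box A B ↔ x 0 ∈ A ∧ x 1 ∈ B := Iff.rfl

def Kset : Set (EuclideanSpace ℝ (Fin 2)) := {x | ∀ i, x i ∈ Set.Icc (0 : ℝ) 1}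

/-! ### Mean width of the ball -/

lemma norm_dir (θ : ℝ) : ‖dir θ‖ = 1 := by
  simp [dir, EuclideanSpace.norm_eq, Fin.sum_univ_two]

lemma inner_dir (θ : ℝ) (v : EuclideanSpace ℝ (Fin 2)) :
    (inner ℝ v (dir θ) : ℝ) = v 0 * Real.cos θ + v 1 * Real.sin θ := by
  simp [dir, PiLp.inner_apply, Fin.sum_univ_two, RCLike.inner_apply]
  ring

lemma sSup_ball (θ : ℝ) :
    sSup ((fun v => (inner ℝ v (dir θ) : ℝ)) '' Metric.closedBall (0 : EuclideanSpace ℝ (Fin 2)) (1/2)) = 1/2 := by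
  apply IsLUB.csSup_eq
  · constructor
    · rintro x ⟨v, hv, rfl⟩
      calc (inner ℝ v (dir θ) : ℝ) ≤ ‖v‖ * ‖dir θ‖ := real_inner_le_norm v _
        _ ≤ 1/2 * 1 := by
            have := mem_closedBall_zero_iff.mp hv
            have := norm_dir θ
            nlinarith [norm_nonneg v]
        _ = 1/2 := by ring
    · intro b hb
      apply hb
      refine ⟨(1/2 : ℝ) • dir θ, ?_, ?_⟩
      · simp [mem_closedBall_zero_iff, norm_smul, norm_dir]
      · show (inner ℝ _ _ : ℝ) = _; rw [real_inner_smul_left, real_inner_self_eq_norm_sq, norm_dir]; norm_num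
  · exact ⟨_, Set.mem_image_of_mem _ (Metric.mem_closedBall_self (by norm_num))⟩

lemma sInf_ball (θ : ℝ) :
    sInf ((fun v => (inner ℝ v (dir θ) : ℝ)) '' Metric.closedBall (0 : EuclideanSpace ℝ (Fin 2)) (1/2)) = -(1/2) := by
  apply IsGLB.csInf_eq
  · constructor
    · rintro x ⟨v, hv, rfl⟩
      have h := real_inner_le_norm (-v) (dir θ)
      rw [inner_neg_left] at h
      have hv' := mem_closedBall_zero_iff.mp hv
      rw [norm_neg] at h
      have := norm_dir θ
      nlinarith [norm_nonneg v]
    · intro b hb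
      apply hb
      refine ⟨(-(1/2) : ℝ) • dir θ, ?_, ?_⟩
      · simp [mem_closedBall_zero_iff, norm_smul, norm_dir]
      · show (inner ℝ _ _ : ℝ) = _; rw [real_inner_smul_left, real_inner_self_eq_norm_sq, norm_dir]; norm_num
  · exact ⟨_, Set.mem_image_of_mem _ (Metric.mem_closedBall_self (by norm_num))⟩

lemma meanWidth_ball : meanWidth (Metric.closedBall 0 (1/2)) = 1 := by
  rw [meanWidth]
  have : ∀ θ : ℝ, (sSup ((fun v => (inner ℝ v (((WithLp.equiv 2 (Fin 2 → ℝ)).symm ![Real.cos θ, Real.sin θ])) : ℝ)) '' Metric.closedBall (0 : EuclideanSpace ℝ (Fin 2)) (1/2))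
        - sInf ((fun v => (inner ℝ v (((WithLp.equiv 2 (Fin 2 → ℝ)).symm ![Real.cos θ, Real.sin θ])) : ℝ)) '' Metric.closedBall (0 : EuclideanSpace ℝ (Fin 2)) (1/2))) = 1 := by
    intro θ
    rw [show (WithLp.equiv 2 (Fin 2 → ℝ)).symm ![Real.cos θ, Real.sin θ] = dir θ from rfl,
      sSup_ball, sInf_ball]
    norm_num
  rw [intervalIntegral.integral_congr (g := fun _ => (1:ℝ)) (fun θ _ => this θ)]
  simp [div_self, Real.pi_ne_zero]

/-! ### Mean width of the diamond -/

lemma L_witness {r : ℝ} (hr : 0 ≤ r) (c s : ℝ) :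
    ∃ v : EuclideanSpace ℝ (Fin 2), (|v 0| + |v 1| ≤ r) ∧
      v 0 * c + v 1 * s = r * max |c| |s| := by
  rcases le_total |s| |c| with h | h
  · refine ⟨pt (if 0 ≤ c then r else -r) 0, ?_, ?_⟩
    · simp only [pt0, pt1, abs_zero, add_zero]
      split <;> simp [abs_of_nonneg hr, abs_of_nonpos (neg_nonpos.mpr hr)]
    · rw [max_eq_left h]
      simp only [pt0, pt1, zero_mul, add_zero]
      split_ifs with hc
      · rw [abs_of_nonneg hc]
      · rw [abs_of_neg (lt_of_not_ge hc)]; ring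
  · refine ⟨pt 0 (if 0 ≤ s then r else -r), ?_, ?_⟩
    · simp only [pt0, pt1, abs_zero, zero_add]
      split <;> simp [abs_of_nonneg hr, abs_of_nonpos (neg_nonpos.mpr hr)]
    · rw [max_eq_right h]
      simp only [pt0, pt1, zero_mul, zero_add]
      split_ifs with hs
      · rw [abs_of_nonneg hs]
      · rw [abs_of_neg (lt_of_not_ge hs)]; ring

lemma L_bound {r : ℝ} (c s : ℝ) {v : EuclideanSpace ℝ (Fin 2)} (hv : |v 0| + |v 1| ≤ r) :
    v 0 * c + v 1 * s ≤ r * max |c| |s| := by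
  have h1 : v 0 * c ≤ |v 0| * max |c| |s| :=
    (le_abs_self _).trans (by rw [abs_mul]; exact mul_le_mul_of_nonneg_left (le_max_left _ _) (abs_nonneg _))
  have h2 : v 1 * s ≤ |v 1| * max |c| |s| :=
    (le_abs_self _).trans (by rw [abs_mul]; exact mul_le_mul_of_nonneg_left (le_max_right _ _) (abs_nonneg _))
  nlinarith [abs_nonneg c, le_max_left |c| |s|, abs_nonneg (v 0), abs_nonneg (v 1)]

lemma sSup_L {r : ℝ} (hr : 0 ≤ r) (θ : ℝ) :
    sSup ((fun v => (inner ℝ v (dir θ) : ℝ)) '' {x : EuclideanSpace ℝ (Fin 2) | |x 0| + |x 1| ≤ r})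
      = r * max |Real.cos θ| |Real.sin θ| := by
  obtain ⟨w, hw, hweq⟩ := L_witness hr (Real.cos θ) (Real.sin θ)
  apply IsLUB.csSup_eq
  · constructor
    · rintro x ⟨v, hv, rfl⟩
      simp only [inner_dir]; exact L_bound _ _ hv
    · intro b hb
      apply hb
      exact ⟨w, hw, by simp only [inner_dir]; exact hweq⟩
  · exact ⟨_, Set.mem_image_of_mem _ (show |(0:EuclideanSpace ℝ (Fin 2)) 0| + |(0:EuclideanSpace ℝ (Fin 2)) 1| ≤ r by simp [hr])⟩

lemma sInf_L {r : ℝ} (hr : 0 ≤ r) (θ : ℝ) :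
    sInf ((fun v => (inner ℝ v (dir θ) : ℝ)) '' {x : EuclideanSpace ℝ (Fin 2) | |x 0| + |x 1| ≤ r})
      = -(r * max |Real.cos θ| |Real.sin θ|) := by
  obtain ⟨w, hw, hweq⟩ := L_witness hr (Real.cos θ) (Real.sin θ)
  apply IsGLB.csInf_eq
  · constructor
    · rintro x ⟨v, hv, rfl⟩
      simp only [inner_dir]
      have hnv : |(-v) 0| + |(-v) 1| ≤ r := by
        simpa [abs_neg] using hv
      have := L_bound (r := r) (Real.cos θ) (Real.sin θ) hnv
      simp only [PiLp.neg_apply, neg_mul] at this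
      linarith
    · intro b hb
      apply hb
      refine ⟨-w, ?_, ?_⟩
      · simpa [abs_neg] using hw
      · simp only [inner_dir]
        simp only [PiLp.neg_apply, neg_mul]
        linarith
  · exact ⟨_, Set.mem_image_of_mem _ (show |(0:EuclideanSpace ℝ (Fin 2)) 0| + |(0:EuclideanSpace ℝ (Fin 2)) 1| ≤ r by simp [hr])⟩

/-! ### The trigonometric integral -/

lemma cont_f : Continuous (fun θ : ℝ => max |Real.cos θ| |Real.sin θ|) :=
  (continuous_cos.abs.max continuous_sin.abs)

lemma per_f : Function.Periodic (fun θ : ℝ => max |Real.cos θ| |Real.sin θ|) (π/2) := by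
  intro x
  simp only [Real.cos_add_pi_div_two, Real.sin_add_pi_div_two, abs_neg, max_comm]

open intervalIntegral in
lemma int1 : ∫ θ in (0:ℝ)..(π/4), max |Real.cos θ| |Real.sin θ| = Real.sqrt 2 / 2 := by
  rw [intervalIntegral.integral_congr (g := fun θ => Real.cos θ) ?_]
  · rw [integral_cos, Real.sin_pi_div_four, Real.sin_zero, sub_zero]
  · intro θ hθ
    rw [Set.uIcc_of_le (by positivity)] at hθ
    obtain ⟨h1, h2⟩ := hθ
    have hpi := Real.pi_pos
    have hs : 0 ≤ Real.sin θ := Real.sin_nonneg_of_nonneg_of_le_pi h1 (by linarith)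
    have hc : 0 ≤ Real.cos θ := Real.cos_nonneg_of_mem_Icc ⟨by linarith, by linarith⟩
    have hsc : Real.sin θ ≤ Real.cos θ := by
      calc Real.sin θ ≤ Real.sin (π/4) :=
            Real.sin_le_sin_of_le_of_le_pi_div_two (by linarith) (by linarith) h2
        _ = Real.cos (π/4) := by rw [Real.sin_pi_div_four, Real.cos_pi_div_four]
        _ ≤ Real.cos θ := Real.cos_le_cos_of_nonneg_of_le_pi h1 (by linarith) h2
    simp [abs_of_nonneg hs, abs_of_nonneg hc, max_eq_left hsc]

open intervalIntegral in
lemma int2 : ∫ θ in (π/4:ℝ)..(π/2), max |Real.cos θ| |Real.sin θ| = Real.sqrt 2 / 2 := by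
  rw [intervalIntegral.integral_congr (g := fun θ => Real.sin θ) ?_]
  · rw [integral_sin, Real.cos_pi_div_four, Real.cos_pi_div_two, sub_zero]
  · intro θ hθ
    have hpi := Real.pi_pos
    rw [Set.uIcc_of_le (by linarith)] at hθ
    obtain ⟨h1, h2⟩ := hθ
    have hs : 0 ≤ Real.sin θ := Real.sin_nonneg_of_nonneg_of_le_pi (by linarith) (by linarith)
    have hc : 0 ≤ Real.cos θ := Real.cos_nonneg_of_mem_Icc ⟨by linarith, by linarith⟩
    have hsc : Real.cos θ ≤ Real.sin θ := by
      calc Real.cos θ ≤ Real.cos (π/4) :=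
            Real.cos_le_cos_of_nonneg_of_le_pi (by linarith) (by linarith) h1
        _ = Real.sin (π/4) := by rw [Real.sin_pi_div_four, Real.cos_pi_div_four]
        _ ≤ Real.sin θ := Real.sin_le_sin_of_le_of_le_pi_div_two (by linarith) (by linarith) h1
    simp [abs_of_nonneg hs, abs_of_nonneg hc, max_eq_right hsc]

lemma intF : ∫ θ in (0:ℝ)..(2*π), max |Real.cos θ| |Real.sin θ| = 4 * Real.sqrt 2 := by
  have h4 : (2:ℝ) * π = 0 + (4:ℤ) • (π/2) := by rw [zero_add, zsmul_eq_mul]; push_cast; ring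
  rw [h4, per_f.intervalIntegral_add_zsmul_eq 4 0
    (fun a b => cont_f.intervalIntegrable a b)]
  have : ∫ θ in (0:ℝ)..(0 + π/2), max |Real.cos θ| |Real.sin θ| = Real.sqrt 2 := by
    rw [zero_add, ← intervalIntegral.integral_add_adjacent_intervals (b := π/4)
      (cont_f.intervalIntegrable _ _) (cont_f.intervalIntegrable _ _), int1, int2]
    ring
  rw [this, zsmul_eq_mul]
  push_cast
  ring

lemma meanWidth_L : meanWidth {x : EuclideanSpace ℝ (Fin 2) | |x 0| + |x 1| ≤ π * Real.sqrt 2 / 8} = 1 := by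
  set r : ℝ := π * Real.sqrt 2 / 8 with hrdef
  have hr : 0 ≤ r := by positivity
  rw [meanWidth]
  have : ∀ θ : ℝ, (sSup ((fun v => (inner ℝ v (((WithLp.equiv 2 (Fin 2 → ℝ)).symm ![Real.cos θ, Real.sin θ])) : ℝ)) '' {x : EuclideanSpace ℝ (Fin 2) | |x 0| + |x 1| ≤ r})
        - sInf ((fun v => (inner ℝ v (((WithLp.equiv 2 (Fin 2 → ℝ)).symm ![Real.cos θ, Real.sin θ])) : ℝ)) '' {x : EuclideanSpace ℝ (Fin 2) | |x 0| + |x 1| ≤ r}))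
      = 2 * r * max |Real.cos θ| |Real.sin θ| := by
    intro θ
    rw [show (WithLp.equiv 2 (Fin 2 → ℝ)).symm ![Real.cos θ, Real.sin θ] = dir θ from rfl,
      sSup_L hr, sInf_L hr]
    ring
  rw [intervalIntegral.integral_congr (g := fun θ => 2 * r * max |Real.cos θ| |Real.sin θ|) (fun θ _ => this θ),
    intervalIntegral.integral_const_mul, intF]
  have h2 : Real.sqrt 2 * Real.sqrt 2 = 2 := Real.mul_self_sqrt (by norm_num)
  have hpi := Real.pi_ne_zero
  rw [div_eq_one_iff_eq (by positivity)]
  rw [hrdef]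
  field_simp
  linear_combination 4 * h2

/-! ### Volumes -/

lemma box_eq (A B : Set ℝ) :
    box A B = (MeasurableEquiv.toLp 2 (Fin 2 → ℝ)).symm ⁻¹' (Set.univ.pi ![A, B]) := by
  ext x
  simp [box, Set.mem_pi, Fin.forall_fin_two, MeasurableEquiv.coe_toLp_symm]

lemma box_meas {A B : Set ℝ} (hA : MeasurableSet A) (hB : MeasurableSet B) :
    MeasurableSet (box A B) := by
  rw [box_eq]
  exact (MeasurableEquiv.toLp 2 (Fin 2 → ℝ)).symm.measurable
    (MeasurableSet.univ_pi (by intro i; fin_cases i <;> simpa))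

lemma box_vol {A B : Set ℝ} (hA : MeasurableSet A) (hB : MeasurableSet B) :
    volume (box A B) = volume A * volume B := by
  rw [box_eq, (EuclideanSpace.volume_preserving_symm_measurableEquiv_toLp (Fin 2)).measure_preimage
    (MeasurableSet.univ_pi (by intro i; fin_cases i <;> simpa)).nullMeasurableSet,
    volume_pi_pi, Fin.prod_univ_two]
  simp

lemma abs_coord_le (v : EuclideanSpace ℝ (Fin 2)) (i : Fin 2) : |v i| ≤ ‖v‖ := by
  rw [EuclideanSpace.norm_eq]
  simp only [Real.norm_eq_abs, sq_abs]
  have : ∑ j, v j ^ 2 = v 0 ^2 + v 1 ^2 := Fin.sum_univ_two _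
  calc |v i| = Real.sqrt ((v i)^2) := (Real.sqrt_sq_eq_abs _).symm
    _ ≤ _ := by
        apply Real.sqrt_le_sqrt
        rw [this]
        fin_cases i <;> simp [Fin.isValue] <;> nlinarith [sq_nonneg (v 0), sq_nonneg (v 1)]

lemma smul_K {t : ℝ} (ht : 0 < t) : t • Kset = box (Set.Icc 0 t) (Set.Icc 0 t) := by
  ext x
  rw [Set.mem_smul_set_iff_inv_smul_mem₀ ht.ne']
  have hco : ∀ y : ℝ, t⁻¹ * y ∈ Set.Icc (0:ℝ) 1 ↔ y ∈ Set.Icc 0 t := by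
    intro y
    rw [Set.mem_Icc, Set.mem_Icc]
    constructor
    · rintro ⟨h1, h2⟩
      constructor <;> nlinarith [mul_inv_cancel₀ ht.ne']
    · rintro ⟨h1, h2⟩
      constructor
      · positivity
      · rw [inv_mul_le_iff₀ ht]; linarith
  show (∀ i, (t⁻¹ • x) i ∈ Set.Icc (0:ℝ) 1) ↔ _
  rw [Fin.forall_fin_two]
  show t⁻¹ * x 0 ∈ Set.Icc (0:ℝ) 1 ∧ t⁻¹ * x 1 ∈ Set.Icc (0:ℝ) 1 ↔ _
  rw [hco, hco]
  rfl

lemma upper_subset {t : ℝ} (ht : 0 < t) :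
    t • Kset + Metric.closedBall 0 (1/2) ⊆ box (Set.Icc (-(1/2)) (t+1/2)) (Set.Icc (-(1/2)) (t+1/2)) := by
  rw [smul_K ht]
  rintro x ⟨k, hk, b, hb, rfl⟩
  obtain ⟨hk0, hk1⟩ := hk
  rw [mem_closedBall_zero_iff] at hb
  have h0 := (abs_le.mp ((abs_coord_le b 0).trans hb))
  have h1 := (abs_le.mp ((abs_coord_le b 1).trans hb))
  obtain ⟨hA, hB⟩ := hk0
  obtain ⟨hC, hD⟩ := hk1
  refine ⟨⟨?_, ?_⟩, ⟨?_, ?_⟩⟩ <;> simp only [PiLp.add_apply] <;> linarith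

lemma clamp_mem {a b x : ℝ} (hab : a ≤ b) : max a (min x b) ∈ Set.Icc a b :=
  ⟨le_max_left _ _, max_le hab (min_le_right _ _)⟩

lemma clamp_dist {a b c x : ℝ} (hab : a ≤ b) (hc : 0 ≤ c) (h1 : a - c ≤ x) (h2 : x ≤ b + c) :
    |x - max a (min x b)| ≤ c := by
  rcases le_total x a with h | h
  · rw [min_eq_left (h.trans hab), max_eq_left h, abs_of_nonpos (by linarith)]
    linarith
  · rcases le_total x b with h' | h'
    · rw [min_eq_left h', max_eq_right h, sub_self, abs_zero]; exact hc
    · rw [min_eq_right h', max_eq_right hab, abs_of_nonneg (by linarith)]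
      linarith

lemma decomp1d {r t x : ℝ} (hr : 0 ≤ r) (ht : 0 ≤ t)
    (hx1 : -(1/2 + r) ≤ x) (hx2 : x ≤ t + (1/2 + r)) :
    ∃ k b l : ℝ, k ∈ Set.Icc 0 t ∧ |b| ≤ 1/2 ∧ |l| ≤ r ∧ k + b + l = x := by
  set k := max 0 (min x t) with hk
  have hkm : k ∈ Set.Icc 0 t := clamp_mem ht
  have hu : |x - k| ≤ 1/2 + r := clamp_dist ht (by linarith) (by linarith) (by linarith)
  set u := x - k with hudef
  set b := max (-(1/2)) (min u (1/2)) with hb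
  have hbm : b ∈ Set.Icc (-(1/2) : ℝ) (1/2) := clamp_mem (by norm_num)
  have hl : |u - b| ≤ r := by
    have := abs_le.mp hu
    exact clamp_dist (by norm_num) hr (by linarith [this.1]) (by linarith [this.2])
  exact ⟨k, b, u - b, hkm, abs_le.mpr ⟨hbm.1, hbm.2⟩, hl, by ring⟩

lemma pt_mem_ball {b : ℝ} (hb : |b| ≤ 1/2) :
    pt b 0 ∈ Metric.closedBall (0 : EuclideanSpace ℝ (Fin 2)) (1/2) := by
  rw [mem_closedBall_zero_iff, EuclideanSpace.norm_eq]
  simp only [Real.norm_eq_abs, sq_abs, Fin.sum_univ_two, pt0, pt1]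
  rw [show b^2 + (0:ℝ)^2 = b^2 by ring, Real.sqrt_sq_eq_abs]
  exact hb

lemma pt_mem_ball' {b : ℝ} (hb : |b| ≤ 1/2) :
    pt 0 b ∈ Metric.closedBall (0 : EuclideanSpace ℝ (Fin 2)) (1/2) := by
  rw [mem_closedBall_zero_iff, EuclideanSpace.norm_eq]
  simp only [Real.norm_eq_abs, sq_abs, Fin.sum_univ_two, pt0, pt1]
  rw [show (0:ℝ)^2 + b^2 = b^2 by ring, Real.sqrt_sq_eq_abs]
  exact hb

lemma hslab_subset {r t : ℝ} (hr : 0 ≤ r) (ht : 0 < t) :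
    box (Set.Icc (-(1/2+r)) (t+(1/2+r))) (Set.Icc 0 t) ⊆
      t • Kset + Metric.closedBall 0 (1/2) + {x : EuclideanSpace ℝ (Fin 2) | |x 0| + |x 1| ≤ r} := by
  rintro x ⟨hx0, hx1⟩
  obtain ⟨k, b, l, hkm, hbm, hlm, heq⟩ := decomp1d hr ht.le hx0.1 hx0.2
  refine ⟨pt k (x 1) + pt b 0, ⟨pt k (x 1), ?_, pt b 0, pt_mem_ball hbm, rfl⟩, pt l 0, ?_, ?_⟩
  · rw [smul_K ht]; exact ⟨hkm, hx1⟩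
  · show |pt l 0 0| + |pt l 0 1| ≤ r
    simpa using hlm
  · ext i
    fin_cases i <;> simp [pt] <;> linarith

lemma vslab_subset {r t : ℝ} (hr : 0 ≤ r) (ht : 0 < t) :
    box (Set.Icc 0 t) (Set.Icc (-(1/2+r)) (t+(1/2+r))) ⊆
      t • Kset + Metric.closedBall 0 (1/2) + {x : EuclideanSpace ℝ (Fin 2) | |x 0| + |x 1| ≤ r} := by
  rintro x ⟨hx0, hx1⟩
  obtain ⟨k, b, l, hkm, hbm, hlm, heq⟩ := decomp1d hr ht.le hx1.1 hx1.2
  refine ⟨pt (x 0) k + pt 0 b, ⟨pt (x 0) k, ?_, pt 0 b, pt_mem_ball' hbm, rfl⟩, pt 0 l, ?_, ?_⟩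
  · rw [smul_K ht]; exact ⟨hx0, hkm⟩
  · show |pt 0 l 0| + |pt 0 l 1| ≤ r
    simpa using hlm
  · ext i
    fin_cases i <;> simp [pt] <;> linarith

lemma sqrt2_ge : (1.414 : ℝ) ≤ Real.sqrt 2 := by
  nlinarith [Real.sqrt_nonneg 2, Real.sq_sqrt (show (0:ℝ) ≤ 2 by norm_num)]

lemma vol_main {t : ℝ} (ht : 100 < t) :
    volume (t • Kset + Metric.closedBall 0 (1/2)) ^ 2
      < volume (t • Kset + Metric.closedBall 0 (1/2)
          + {x : EuclideanSpace ℝ (Fin 2) | |x 0| + |x 1| ≤ π * Real.sqrt 2 / 8})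
        * volume (t • Kset) := by
  set r : ℝ := π * Real.sqrt 2 / 8 with hrdef
  have hr : 0 ≤ r := by positivity
  have ht0 : (0:ℝ) < t := by linarith
  have hK : volume (t • Kset) = ENNReal.ofReal (t * t) := by
    rw [smul_K ht0, box_vol measurableSet_Icc measurableSet_Icc, Real.volume_Icc, sub_zero,
      ENNReal.ofReal_mul ht0.le]
  have hU : volume (t • Kset + Metric.closedBall 0 (1/2)) ≤ ENNReal.ofReal ((t+1)^2) := by
    refine (measure_mono (upper_subset ht0)).trans ?_
    rw [box_vol measurableSet_Icc measurableSet_Icc, Real.volume_Icc,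
      show t + 1/2 - -(1/2) = t + 1 by ring, ← ENNReal.ofReal_mul (by linarith)]
    exact le_of_eq (by ring_nf)
  set S := t • Kset + Metric.closedBall 0 (1/2)
      + {x : EuclideanSpace ℝ (Fin 2) | |x 0| + |x 1| ≤ r} with hS
  have hV : ENNReal.ofReal ((t+1+2*r)*t + t*(1/2+r) + t*(1/2+r)) ≤ volume S := by
    set P1 := box (Set.Icc (-(1/2+r)) (t+(1/2+r))) (Set.Icc 0 t)
    set P2 := box (Set.Icc 0 t) (Set.Ioc t (t+(1/2+r)))
    set P3 := box (Set.Icc 0 t) (Set.Ico (-(1/2+r)) 0)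
    have hsub : P1 ∪ P2 ∪ P3 ⊆ S := by
      refine Set.union_subset (Set.union_subset (hslab_subset hr ht0) ?_) ?_
      · refine Set.Subset.trans ?_ (vslab_subset hr ht0)
        intro x hx
        rw [box_mem] at hx ⊢
        obtain ⟨h1, h2⟩ := hx
        exact ⟨h1, ⟨by have := h2.1; linarith, h2.2⟩⟩
      · refine Set.Subset.trans ?_ (vslab_subset hr ht0)
        intro x hx
        rw [box_mem] at hx ⊢
        obtain ⟨h1, h2⟩ := hx
        exact ⟨h1, ⟨h2.1, by have := h2.2; linarith⟩⟩
    refine le_trans ?_ (measure_mono hsub)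
    have hd12 : Disjoint P1 P2 := by
      rw [Set.disjoint_left]
      intro x h1 h2
      rw [box_mem] at h1 h2
      exact absurd h2.2.1 (not_lt.mpr h1.2.2)
    have hd3 : Disjoint (P1 ∪ P2) P3 := by
      rw [Set.disjoint_left]
      intro x h1 h3
      rw [Set.mem_union, box_mem, box_mem] at h1
      rw [box_mem] at h3
      have hx1neg := h3.2.2
      rcases h1 with h | h
      · exact absurd h.2.1 (not_le.mpr hx1neg)
      · have := h.2.1; linarith
    rw [measure_union hd3 (box_meas measurableSet_Icc measurableSet_Ico),
      measure_union hd12 (box_meas measurableSet_Icc measurableSet_Ioc),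
      box_vol measurableSet_Icc measurableSet_Icc,
      box_vol measurableSet_Icc measurableSet_Ioc,
      box_vol measurableSet_Icc measurableSet_Ico,
      Real.volume_Icc, Real.volume_Icc, Real.volume_Ioc, Real.volume_Ico]
    rw [show t+(1/2+r) - -(1/2+r) = t+1+2*r by ring, sub_zero,
      show t+(1/2+r) - t = 1/2+r by ring, show (0:ℝ) - -(1/2+r) = 1/2+r by ring,
      ← ENNReal.ofReal_mul (by linarith), ← ENNReal.ofReal_mul ht0.le,
      ← ENNReal.ofReal_add (by nlinarith) (by nlinarith),
      ← ENNReal.ofReal_add (by nlinarith) (by nlinarith)]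
  have hreal : (t+1)^2 * (t+1)^2 < ((t+1+2*r)*t + t*(1/2+r) + t*(1/2+r)) * (t*t) := by
    have hπ : (3.141592 : ℝ) < π := Real.pi_gt_d6
    have hs2 := sqrt2_ge
    have h4r : (2.22 : ℝ) ≤ 4 * r := by
      rw [hrdef]
      nlinarith
    nlinarith [mul_pos ht0 ht0, mul_pos (mul_pos ht0 ht0) ht0,
      mul_lt_mul_of_pos_right ht (mul_pos ht0 ht0)]
  calc volume (t • Kset + Metric.closedBall 0 (1/2)) ^ 2
      ≤ ENNReal.ofReal ((t+1)^2) ^ 2 := by exact pow_le_pow_left' hU 2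
    _ = ENNReal.ofReal ((t+1)^2 * (t+1)^2) := by
        rw [ENNReal.ofReal_mul (by positivity), sq]
    _ < ENNReal.ofReal (((t+1+2*r)*t + t*(1/2+r) + t*(1/2+r)) * (t*t)) := by
        rw [ENNReal.ofReal_lt_ofReal_iff (by nlinarith [mul_pos ht0 ht0])]
        exact hreal
    _ = ENNReal.ofReal ((t+1+2*r)*t + t*(1/2+r) + t*(1/2+r)) * ENNReal.ofReal (t*t) := by
        rw [ENNReal.ofReal_mul (by nlinarith)]
    _ ≤ volume S * volume (t • Kset) := by
        rw [hK]
        exact mul_le_mul_left hV _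

theorem stmt_17 :
    let K : Set (EuclideanSpace ℝ (Fin 2)) := {x | ∀ i, x i ∈ Set.Icc (0 : ℝ) 1}
    let B : Set (EuclideanSpace ℝ (Fin 2)) := Metric.closedBall 0 (1 / 2)
    let L : Set (EuclideanSpace ℝ (Fin 2)) := {x | |x 0| + |x 1| ≤ π * Real.sqrt 2 / 8}
    meanWidth L = 1 ∧ meanWidth B = 1 ∧
      ∃ T : ℝ, ∀ t : ℝ, T < t →
        volume (t • K + B) ^ 2 < volume (t • K + B + L) * volume (t • K) := by
  intro K B L
  refine ⟨meanWidth_L, meanWidth_ball, 100, fun t ht => vol_main ht⟩
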